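/- There exist constants c₁, c₂ > 0 such that for every n ≥ 2, c₁·log n ≤ sup{ ‖x‖₂ / ‖x‖_{Z_2^n} : x ∈ ℝⁿ×ℝⁿ, x ≠ 0 } ≤ c₂·log n; that is, the operator norm of the identity map from Z_2^n to ℓ_2^{2n} is of order log n. -/

import Mathlib

open scoped BigOperators

/-- The Euclidean norm on `ℝⁿ`. -/
noncomputable def l2 {n : ℕ} (b : Fin n → ℝ) : ℝ := Real.sqrt (∑ j, b j ^ 2)

/-- The Kalton–Peck map `F(b)_j = b_j log(|b_j|/‖b‖₂)`, with `F(b)_j = 0` when `b_j = 0`. -/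
noncomputable def KPF {n : ℕ} (b : Fin n → ℝ) : Fin n → ℝ :=
  fun j => if b j = 0 then 0 else b j * Real.log (|b j| / l2 b)

/-- The Kalton–Peck quasi-norm `‖(a,b)‖ = ‖b‖₂ + ‖a - F(b)‖₂` on `ℝⁿ × ℝⁿ`. -/
noncomputable def znorm {n : ℕ} (x : (Fin n → ℝ) × (Fin n → ℝ)) : ℝ :=
  l2 x.2 + l2 (x.1 - KPF x.2)

/-- Operator "norm" `sup_{x ≠ 0} N_W(T x) / N_V(x)` of a map `T` between spaces
equipped with (quasi-)norms `N_V`, `N_W`. -/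
noncomputable def ratioSup {V W : Type*} [Zero V] (NV : V → ℝ) (NW : W → ℝ) (T : V → W) : ℝ :=
  ⨆ x : {x : V // x ≠ 0}, NW (T x.1) / NV x.1

/-- The Euclidean norm on `ℝⁿ × ℝⁿ ≅ ℝ^{2n}`. -/
noncomputable def l2p {n : ℕ} (x : (Fin n → ℝ) × (Fin n → ℝ)) : ℝ :=
  Real.sqrt ((∑ j, x.1 j ^ 2) + ∑ j, x.2 j ^ 2)


lemma l2_eq_norm {n : ℕ} (b : Fin n → ℝ) :
    l2 b = ‖(WithLp.equiv 2 (Fin n → ℝ)).symm b‖ := by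
  rw [EuclideanSpace.norm_eq]; simp [l2, sq_abs]
lemma l2_nonneg {n : ℕ} (b : Fin n → ℝ) : 0 ≤ l2 b := Real.sqrt_nonneg _
lemma l2_add_le {n : ℕ} (a b : Fin n → ℝ) : l2 (a + b) ≤ l2 a + l2 b := by
  simp only [l2_eq_norm]
  exact norm_add_le ((WithLp.equiv 2 (Fin n → ℝ)).symm a) ((WithLp.equiv 2 (Fin n → ℝ)).symm b)
lemma l2_eq_zero {n : ℕ} {b : Fin n → ℝ} (h : l2 b = 0) : b = 0 := by
  rw [l2_eq_norm] at h
  have := norm_eq_zero.mp h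
  simpa using congrArg (WithLp.equiv 2 (Fin n → ℝ)) this
lemma sq_l2 {n : ℕ} (b : Fin n → ℝ) : (l2 b)^2 = ∑ j, b j ^ 2 := by
  rw [l2, Real.sq_sqrt]; positivity
-- t * (log (1/t))^2 ≤ 4 for 0 < t ≤ 1
lemma tlog_bound {t : ℝ} (ht : 0 < t) (ht1 : t ≤ 1) : t * (Real.log t)^2 ≤ 4 := by
  set u := Real.sqrt t with hu
  have hu0 : 0 < u := Real.sqrt_pos.mpr ht
  have htu : t = u^2 := (Real.sq_sqrt ht.le).symm
  have hlog : Real.log t = 2 * Real.log u := by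
    rw [htu, Real.log_pow]; push_cast; ring
  have h1 : -Real.log u ≤ 1/u := by
    have := Real.log_le_sub_one_of_pos (show (0:ℝ) < 1/u by positivity)
    rw [Real.log_div one_ne_zero (ne_of_gt hu0), Real.log_one] at this
    nlinarith
  have h2 : (Real.log u)^2 ≤ (1/u)^2 := by
    rcases le_or_gt (Real.log u) 0 with h | h
    · have : (Real.log u)^2 = (-Real.log u)^2 := by ring
      rw [this]
      apply pow_le_pow_left₀ (by linarith) h1
    · have hu1 : 1 ≤ u := by
        by_contra hc
        push_neg at hc
        have := Real.log_neg hu0 hc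
        linarith
      have : Real.log u ≤ 0 := by
        have hul : u ≤ 1 := by
          nlinarith
        exact Real.log_nonpos hu0.le hul
      linarith
  calc t * (Real.log t)^2 = u^2 * (2 * Real.log u)^2 := by rw [hlog, htu]
    _ = 4 * (u^2 * (Real.log u)^2) := by ring
    _ ≤ 4 * (u^2 * (1/u)^2) := by nlinarith
    _ = 4 := by field_simp

lemma KPF_sq_sum_le {n : ℕ} (hn : 2 ≤ n) (b : Fin n → ℝ) :
    ∑ j, (KPF b j)^2 ≤ ((Real.log n)^2 + 4) * ∑ j, (b j)^2 := by
  set S := ∑ j, (b j)^2 with hS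
  have hS0 : 0 ≤ S := by positivity
  have hn0 : (0:ℝ) < n := by positivity
  have key : ∀ j, (KPF b j)^2 ≤ (Real.log n)^2 * (b j)^2 + 4 * S / n := by
    intro j
    by_cases hbj : b j = 0
    · simp [KPF, hbj]
      positivity
    · have hbj2 : 0 < (b j)^2 := by positivity
      have hjS : (b j)^2 ≤ S := by
        apply Finset.single_le_sum (f := fun i => (b i)^2) (fun i _ => by positivity) (Finset.mem_univ j)
      have hSpos : 0 < S := lt_of_lt_of_le hbj2 hjS
      have hL : l2 b = Real.sqrt S := rfl
      have hLpos : 0 < l2 b := by rw [hL]; exact Real.sqrt_pos.mpr hSpos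
      set t := |b j| / l2 b with htdef
      have ht0 : 0 < t := div_pos (abs_pos.mpr hbj) hLpos
      have ht1 : t ≤ 1 := by
        rw [htdef, div_le_one hLpos, hL]
        rw [show |b j| = Real.sqrt ((b j)^2) from (Real.sqrt_sq_eq_abs _).symm]
        exact Real.sqrt_le_sqrt hjS
      have hKPF : (KPF b j)^2 = (b j)^2 * (Real.log t)^2 := by
        simp [KPF, hbj]; ring
      have hbt : (b j)^2 = S * t^2 := by
        have : |b j| = l2 b * t := by rw [htdef]; field_simp
        have h2 : (b j)^2 = (l2 b)^2 * t^2 := by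
          rw [← sq_abs, this]; ring
        rw [h2, sq_l2]
      rcases le_or_gt (1/(n:ℝ)) t with hcase | hcase
      · -- |log t| ≤ log n
        have hlogt_le : Real.log t ≤ 0 := Real.log_nonpos ht0.le ht1
        have hlogt_ge : -Real.log n ≤ Real.log t := by
          have := Real.log_le_log (by positivity) hcase
          rw [Real.log_div one_ne_zero (ne_of_gt hn0), Real.log_one] at this
          linarith
        have hlogn0 : 0 ≤ Real.log n := Real.log_nonneg (by exact_mod_cast Nat.one_le_of_lt hn)
        have : (Real.log t)^2 ≤ (Real.log n)^2 := by nlinarith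
        rw [hKPF]
        have h4 : 0 ≤ 4 * S / n := by positivity
        nlinarith
      · -- small t
        rw [hKPF, hbt]
        have h1 : t * (Real.log t)^2 ≤ 4 := tlog_bound ht0 ht1
        have h2 : S * t^2 * (Real.log t)^2 = S * t * (t * (Real.log t)^2) := by ring
        rw [h2]
        have h3 : S * t * (t * (Real.log t)^2) ≤ S * t * 4 := by nlinarith
        have h4 : S * t * 4 ≤ 4 * S / n := by
          have h5 : S * t ≤ S * (1/n) := mul_le_mul_of_nonneg_left hcase.le hS0
          rw [div_eq_mul_inv]
          rw [one_div] at h5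
          linarith
        nlinarith [sq_nonneg (Real.log n * b j)]
  calc ∑ j, (KPF b j)^2 ≤ ∑ j, ((Real.log n)^2 * (b j)^2 + 4 * S / n) :=
        Finset.sum_le_sum (fun j _ => key j)
    _ = (Real.log n)^2 * S + n * (4 * S / n) := by
        rw [Finset.sum_add_distrib, ← Finset.mul_sum]
        rw [Finset.sum_const, Finset.card_univ, Fintype.card_fin, nsmul_eq_mul]
    _ = ((Real.log n)^2 + 4) * S := by field_simp

lemma log_half {n : ℕ} (hn : 2 ≤ n) : (1:ℝ)/2 ≤ Real.log n := by
  have h2 : (1:ℝ)/2 ≤ Real.log 2 := by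
    have := Real.log_two_gt_d9; linarith
  have : Real.log 2 ≤ Real.log n := Real.log_le_log (by norm_num) (by exact_mod_cast hn)
  linarith

lemma KPF_l2_le {n : ℕ} (hn : 2 ≤ n) (b : Fin n → ℝ) :
    l2 (KPF b) ≤ 5 * Real.log n * l2 b := by
  have hlog := log_half hn
  have h1 : ∑ j, (KPF b j)^2 ≤ (5 * Real.log n * l2 b)^2 := by
    calc ∑ j, (KPF b j)^2 ≤ ((Real.log n)^2 + 4) * ∑ j, (b j)^2 := KPF_sq_sum_le hn b
      _ ≤ 25 * (Real.log n)^2 * ∑ j, (b j)^2 := by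
          have hS : (0:ℝ) ≤ ∑ j, (b j)^2 := by positivity
          have hlog2 : (1:ℝ)/4 ≤ (Real.log n)^2 := by nlinarith
          nlinarith [mul_le_mul_of_nonneg_right hlog2 hS]
      _ = (5 * Real.log n * l2 b)^2 := by rw [mul_pow, mul_pow, sq_l2]; ring
  have h2 : 0 ≤ 5 * Real.log n * l2 b := by
    have := l2_nonneg b; nlinarith
  rw [l2]
  calc Real.sqrt (∑ j, (KPF b j)^2) ≤ Real.sqrt ((5 * Real.log n * l2 b)^2) :=
        Real.sqrt_le_sqrt h1
    _ = 5 * Real.log n * l2 b := Real.sqrt_sq h2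

lemma znorm_nonneg {n : ℕ} (x : (Fin n → ℝ) × (Fin n → ℝ)) : 0 ≤ znorm x :=
  add_nonneg (l2_nonneg _) (l2_nonneg _)

lemma znorm_pos {n : ℕ} {x : (Fin n → ℝ) × (Fin n → ℝ)} (hx : x ≠ 0) : 0 < znorm x := by
  rcases lt_or_eq_of_le (znorm_nonneg x) with h | h
  · exact h
  · exfalso
    have hb2 := l2_nonneg x.2
    have ha2 := l2_nonneg (x.1 - KPF x.2)
    have hzn : znorm x = 0 := h.symm
    unfold znorm at hzn
    have hb : x.2 = 0 := l2_eq_zero (by linarith)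
    have hK : KPF x.2 = 0 := by
      funext j; simp [KPF, hb]
    have ha : x.1 - KPF x.2 = 0 := l2_eq_zero (by linarith)
    rw [hK, sub_zero] at ha
    exact hx (Prod.ext ha hb)

lemma sqrt_add_le {A B : ℝ} (hA : 0 ≤ A) (hB : 0 ≤ B) :
    Real.sqrt (A + B) ≤ Real.sqrt A + Real.sqrt B := by
  have h : A + B ≤ (Real.sqrt A + Real.sqrt B)^2 := by
    have h1 := Real.sq_sqrt hA
    have h2 := Real.sq_sqrt hB
    have h3 := Real.sqrt_nonneg A
    have h4 := Real.sqrt_nonneg B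
    nlinarith
  calc Real.sqrt (A+B) ≤ Real.sqrt ((Real.sqrt A + Real.sqrt B)^2) := Real.sqrt_le_sqrt h
    _ = _ := Real.sqrt_sq (by positivity)

lemma l2p_le {n : ℕ} (hn : 2 ≤ n) (x : (Fin n → ℝ) × (Fin n → ℝ)) :
    l2p x ≤ 7 * Real.log n * znorm x := by
  obtain ⟨a, b⟩ := x
  have hlog := log_half hn
  have h1 : l2p (a, b) ≤ l2 a + l2 b := by
    rw [l2p, l2, l2]
    exact sqrt_add_le (by positivity) (by positivity)
  have h2 : l2 a ≤ l2 (a - KPF b) + l2 (KPF b) := by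
    have := l2_add_le (a - KPF b) (KPF b)
    simpa using this
  have h3 := KPF_l2_le hn b
  have hz : znorm (a, b) = l2 b + l2 (a - KPF b) := rfl
  have hb := l2_nonneg b
  have haf := l2_nonneg (a - KPF b)
  rw [hz]
  nlinarith



/-- The operator norm of the identity `Z_2^n → ℓ_2^{2n}` is of order `log n`. -/
theorem znorm_to_l2_opnorm :
    ∃ c₁ : ℝ, 0 < c₁ ∧ ∃ c₂ : ℝ, 0 < c₂ ∧ ∀ n : ℕ, 2 ≤ n →
      c₁ * Real.log n ≤ ratioSup znorm l2p (fun x : (Fin n → ℝ) × (Fin n → ℝ) => x) ∧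
      ratioSup znorm l2p (fun x : (Fin n → ℝ) × (Fin n → ℝ) => x) ≤ c₂ * Real.log n := by
  refine ⟨1/2, by norm_num, 7, by norm_num, fun n hn => ?_⟩
  have hlog := log_half hn
  have hn0 : (0:ℝ) < n := by positivity
  have hn1 : (1:ℝ) ≤ n := by exact_mod_cast Nat.one_le_of_lt hn
  -- witness
  set b₀ : Fin n → ℝ := fun _ => 1 with hb₀
  set x₀ : (Fin n → ℝ) × (Fin n → ℝ) := (KPF b₀, b₀) with hx₀
  have hb₀ne : b₀ ≠ 0 := by
    intro h
    have : (b₀ ⟨0, by omega⟩ : ℝ) = 0 := by rw [h]; rfl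
    simp [hb₀] at this
  have hx₀ne : x₀ ≠ 0 := fun h => hb₀ne (congrArg Prod.snd h)
  haveI : Nonempty {x : (Fin n → ℝ) × (Fin n → ℝ) // x ≠ 0} := ⟨⟨x₀, hx₀ne⟩⟩
  have hub : ∀ x : {x : (Fin n → ℝ) × (Fin n → ℝ) // x ≠ 0},
      l2p x.1 / znorm x.1 ≤ 7 * Real.log n := fun x => by
    rw [div_le_iff₀ (znorm_pos x.2)]
    exact l2p_le hn x.1
  have hbdd : BddAbove (Set.range fun x : {x : (Fin n → ℝ) × (Fin n → ℝ) // x ≠ 0} =>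
      l2p x.1 / znorm x.1) := ⟨7 * Real.log n, by rintro y ⟨x, rfl⟩; exact hub x⟩
  have hsup_eq : ratioSup znorm l2p (fun x : (Fin n → ℝ) × (Fin n → ℝ) => x)
      = ⨆ x : {x : (Fin n → ℝ) × (Fin n → ℝ) // x ≠ 0}, l2p x.1 / znorm x.1 := rfl
  constructor
  · -- lower bound
    rw [hsup_eq]
    have hl2b : l2 b₀ = Real.sqrt n := by
      rw [l2]; congr 1; simp [hb₀]
    have hKj : ∀ j, KPF b₀ j = -(1/2 * Real.log n) := by
      intro j
      have h1 : |(1:ℝ)| / l2 b₀ = 1 / Real.sqrt n := by rw [hl2b]; simp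
      show (if b₀ j = 0 then (0:ℝ) else b₀ j * Real.log (|b₀ j| / l2 b₀)) = _
      have hb₀j : b₀ j = 1 := rfl
      rw [hb₀j, if_neg one_ne_zero, h1, one_mul, Real.log_div one_ne_zero
        (by positivity : Real.sqrt (n:ℝ) ≠ 0), Real.log_one, Real.log_sqrt hn0.le]
      ring
    have hzn : znorm x₀ = Real.sqrt n := by
      rw [hx₀, znorm]
      simp only
      rw [sub_self]
      have h0 : l2 (0 : Fin n → ℝ) = 0 := by
        rw [l2]; simp
      rw [h0, add_zero, hl2b]
    have hl2p : Real.sqrt n * (1/2 * Real.log n) ≤ l2p x₀ := by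
      rw [hx₀, l2p]
      simp only
      have h1 : (n:ℝ) * (1/2 * Real.log n)^2 ≤ (∑ j, (KPF b₀ j)^2) + ∑ j, (b₀ j)^2 := by
        have hs : ∑ j : Fin n, (KPF b₀ j)^2 = n * (1/2 * Real.log n)^2 := by
          rw [Finset.sum_congr rfl (fun j _ => by rw [hKj j])]
          rw [Finset.sum_const, Finset.card_univ, Fintype.card_fin, nsmul_eq_mul]
          ring
        rw [hs]
        exact le_add_of_nonneg_right (Finset.sum_nonneg fun j _ => sq_nonneg _)
      calc Real.sqrt n * (1/2 * Real.log n) = Real.sqrt ((n:ℝ) * (1/2 * Real.log n)^2) := by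
            rw [Real.sqrt_mul hn0.le, Real.sqrt_sq (by positivity)]
        _ ≤ _ := Real.sqrt_le_sqrt h1
    have hterm : 1/2 * Real.log n ≤ l2p x₀ / znorm x₀ := by
      rw [hzn, le_div_iff₀ (by positivity : (0:ℝ) < Real.sqrt n)]
      linarith [hl2p]
    calc 1/2 * Real.log n ≤ l2p x₀ / znorm x₀ := hterm
      _ ≤ _ := le_ciSup hbdd ⟨x₀, hx₀ne⟩
  · rw [hsup_eq]
    exact ciSup_le hub
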